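/- arXiv:1401.7253 — 2 statements merged into one kernel-verified Lean document; each statement's English description precedes it below -/
import Mathlib

section
/- (Condition (C1) for G.) Let Θ be a nonempty measurable set of Lévy triplets with 𝒦 := sup_{(b,c,F)∈Θ} { ∫_{ℝ^d} |z|∧|z|² F(dz) + |b| + |c| } < ∞, and let G be the associated nonlinearity. Let (t_k,x_k,p_k,q_k) → (t,x,p,q) in (0,∞)×ℝ^d×ℝ^d×S^d, and let f_k, f ∈ C^{1,2}_b((0,∞)×ℝ^d) be such that f_k(t_k, x_k + ·) → f(t, x + ·) locally uniformly on ℝ^d, D_x f_k → D_x f and D²_{xx} f_k → D²_{xx} f locally uniformly on (0,∞)×ℝ^d, and (f_k)_{k∈ℕ} is uniformly bounded. Then G(p_k, q_k, f_k(t_k, x_k + ·)) → G(p, q, f(t, x + ·)). -/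
open MeasureTheory Filter Set
open scoped NNReal ENNReal Topology

noncomputable section

/-- Euclidean space `ℝ^d`. -/
abbrev Eu (d : ℕ) : Type := EuclideanSpace ℝ (Fin d)

/-- Matrices carry the product (= Borel) σ-algebra. -/
instance matrixMeasurableSpace {d : ℕ} : MeasurableSpace (Matrix (Fin d) (Fin d) ℝ) :=
  inferInstanceAs (MeasurableSpace (Fin d → Fin d → ℝ))

/-- The truncation function `h(z) = z 1_{|z| ≤ 1}`. -/
def trunc {d : ℕ} (z : Eu d) : Eu d := if ‖z‖ ≤ 1 then z else 0

/-- `F` is a Lévy measure on `ℝ^d`: `F({0}) = 0` and `∫ |z|² ∧ 1 F(dz) < ∞`. -/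
def IsLevyMeasure {d : ℕ} (F : Measure (Eu d)) : Prop :=
  F {0} = 0 ∧ (∫⁻ z, ENNReal.ofReal (min (‖z‖ ^ 2) 1) ∂F) < ⊤

/-- `Θ` is a set of Lévy triplets `(b, c, F)`: `c` is symmetric nonnegative definite and
`F` is a Lévy measure. -/
def IsLevyTripletSet {d : ℕ}
    (Θ : Set (Eu d × Matrix (Fin d) (Fin d) ℝ × Measure (Eu d))) : Prop :=
  ∀ x ∈ Θ, x.2.1.PosSemidef ∧ IsLevyMeasure x.2.2

/-- The condition `𝒦 = sup_{(b,c,F) ∈ Θ} { ∫ |z| ∧ |z|² F(dz) + |b| + |c| } < ∞`. -/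
def HasUniformBound {d : ℕ}
    (Θ : Set (Eu d × Matrix (Fin d) (Fin d) ℝ × Measure (Eu d))) : Prop :=
  ∃ K : ℝ≥0, ∀ x ∈ Θ,
    (∫⁻ z, ENNReal.ofReal (min ‖z‖ (‖z‖ ^ 2)) ∂x.2.2)
      + ENNReal.ofReal ‖x.1‖ + ∑ i, ∑ j, ENNReal.ofReal |x.2.1 i j| ≤ K

/-- The condition `𝒦_ε := sup_{F ∈ Θ₃} ∫_{|z| ≤ ε} |z|² F(dz) → 0` as `ε ↓ 0`. -/
def HasVanishingSmallJumps {d : ℕ}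
    (Θ : Set (Eu d × Matrix (Fin d) (Fin d) ℝ × Measure (Eu d))) : Prop :=
  Tendsto (fun ε : ℝ => ⨆ x ∈ Θ, ∫⁻ z in {z : Eu d | ‖z‖ ≤ ε},
      ((‖z‖₊ : ℝ≥0∞) ^ 2) ∂x.2.2)
    (nhdsWithin 0 (Set.Ioi 0)) (nhds 0)

/-- The nonlinearity
`G(p,q,f) = sup_{(b,c,F) ∈ Θ} { p·b + ½ tr[q c] + ∫ [f(z) - f(0) - D f(0)·h(z)] F(dz) }`. -/
def Gop {d : ℕ} (Θ : Set (Eu d × Matrix (Fin d) (Fin d) ℝ × Measure (Eu d)))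
    (p : Eu d) (q : Matrix (Fin d) (Fin d) ℝ) (f : Eu d → ℝ) : ℝ :=
  sSup {r : ℝ | ∃ x ∈ Θ,
    r = (∑ i, p i * x.1 i) + (1 / 2) * (q * x.2.1).trace
      + ∫ z, (f z - f 0 - fderiv ℝ f 0 (trunc z)) ∂x.2.2}

/-- The approximating nonlinearity `G^κ(p,q,f,g)`, where jumps of size `≤ κ` are handled
with the test function `g` and jumps of size `> κ` with `f`. -/
def Gkop {d : ℕ} (Θ : Set (Eu d × Matrix (Fin d) (Fin d) ℝ × Measure (Eu d)))
    (κ : ℝ) (p : Eu d) (q : Matrix (Fin d) (Fin d) ℝ) (f g : Eu d → ℝ) : ℝ :=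
  sSup {r : ℝ | ∃ x ∈ Θ,
    r = (∑ i, p i * x.1 i) + (1 / 2) * (q * x.2.1).trace
      + (∫ z in {z : Eu d | κ < ‖z‖}, (f z - f 0 - fderiv ℝ g 0 (trunc z)) ∂x.2.2)
      + (∫ z in {z : Eu d | ‖z‖ ≤ κ}, (g z - g 0 - fderiv ℝ g 0 (trunc z)) ∂x.2.2)}

/-- `f ∈ C^{1,2}((0,∞) × ℝ^d)`: jointly continuous, continuously differentiable in `t`
and twice continuously differentiable in `x` on `(0,∞) × ℝ^d`. -/
def IsC12 {d : ℕ} (f : ℝ → Eu d → ℝ) : Prop :=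
  ContinuousOn (fun pt : ℝ × Eu d => f pt.1 pt.2) (Set.Ioi 0 ×ˢ Set.univ) ∧
  (∀ x, ContDiffOn ℝ 1 (fun t => f t x) (Set.Ioi 0)) ∧
  (∀ t ∈ Set.Ioi (0 : ℝ), ContDiff ℝ 2 (f t)) ∧
  ContinuousOn (fun pt : ℝ × Eu d => fderiv ℝ (f pt.1) pt.2) (Set.Ioi 0 ×ˢ Set.univ) ∧
  ContinuousOn (fun pt : ℝ × Eu d => fderiv ℝ (fderiv ℝ (f pt.1)) pt.2)
    (Set.Ioi 0 ×ˢ Set.univ)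

/-- `f ∈ C_b^{1,2}((0,∞) × ℝ^d)`: `f ∈ C^{1,2}` with `f` and its derivatives bounded. -/
def IsC12b {d : ℕ} (f : ℝ → Eu d → ℝ) : Prop :=
  IsC12 f ∧
  ∃ C : ℝ, ∀ t ∈ Set.Ioi (0 : ℝ), ∀ x,
    |f t x| ≤ C ∧ |deriv (fun s => f s x) t| ≤ C ∧
    ‖fderiv ℝ (f t) x‖ ≤ C ∧ ‖fderiv ℝ (fderiv ℝ (f t)) x‖ ≤ C

/-- `f` is a bounded semicontinuous (upper or lower) function on `(0,∞) × ℝ^d`. -/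
def IsBoundedSC {d : ℕ} (f : ℝ → Eu d → ℝ) : Prop :=
  (UpperSemicontinuousOn (fun pt : ℝ × Eu d => f pt.1 pt.2) (Set.Ioi 0 ×ˢ Set.univ) ∨
    LowerSemicontinuousOn (fun pt : ℝ × Eu d => f pt.1 pt.2) (Set.Ioi 0 ×ˢ Set.univ)) ∧
  ∃ C : ℝ, ∀ t ∈ Set.Ioi (0 : ℝ), ∀ x, |f t x| ≤ C

lemma taylor2_bound {d : ℕ} (φ : Eu d → ℝ) (φ' : Eu d → (Eu d →L[ℝ] ℝ))
    (φ'' : Eu d → (Eu d →L[ℝ] Eu d →L[ℝ] ℝ))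
    (h1 : ∀ y, HasFDerivAt φ (φ' y) y) (h2 : ∀ y, HasFDerivAt φ' (φ'' y) y)
    {M : ℝ} (z : Eu d) (hM : ∀ y, ‖y‖ ≤ ‖z‖ → ‖φ'' y‖ ≤ M) :
    |φ z - φ 0 - φ' 0 z| ≤ M * ‖z‖ ^ 2 := by
  have hM0 : 0 ≤ M := (norm_nonneg (φ'' 0)).trans (hM 0 (by simp [norm_nonneg]))
  have hball : Convex ℝ (Metric.closedBall (0 : Eu d) ‖z‖) := convex_closedBall _ _
  have hmem : ∀ y : Eu d, y ∈ Metric.closedBall (0 : Eu d) ‖z‖ ↔ ‖y‖ ≤ ‖z‖ := by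
    intro y; simp [Metric.mem_closedBall, dist_zero_right]
  have step1 : ∀ y, ‖y‖ ≤ ‖z‖ → ‖φ' y - φ' 0‖ ≤ M * ‖z‖ := by
    intro y hy
    have h := Convex.norm_image_sub_le_of_norm_hasFDerivWithin_le
      (f := φ') (f' := φ'') (C := M) (s := Metric.closedBall (0:Eu d) ‖z‖)
      (fun u _ => (h2 u).hasFDerivWithinAt)
      (fun u hu => hM u ((hmem u).1 hu)) hball ((hmem 0).2 (by simp)) ((hmem y).2 hy)
    rw [sub_zero] at h
    exact h.trans (mul_le_mul_of_nonneg_left hy hM0)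
  have key := Convex.norm_image_sub_le_of_norm_hasFDerivWithin_le
    (f := fun y => φ y - φ' 0 y) (f' := fun y => φ' y - φ' 0) (C := M * ‖z‖)
    (s := Metric.closedBall (0:Eu d) ‖z‖)
    (fun u _ => ((h1 u).sub ((φ' 0).hasFDerivAt)).hasFDerivWithinAt)
    (fun u hu => step1 u ((hmem u).1 hu)) hball ((hmem z).2 le_rfl) ((hmem 0).2 (by simp))
  simp only [map_zero, sub_zero] at key
  calc |φ z - φ 0 - φ' 0 z| = ‖(φ z - φ' 0 z) - (φ 0 - 0)‖ := by
        rw [Real.norm_eq_abs]; ring_nf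
    _ ≤ M * ‖z‖ * ‖z‖ := by rw [Real.norm_eq_abs, ← abs_neg]; simpa [neg_sub] using key
    _ = M * ‖z‖ ^ 2 := by ring


lemma translate_hasFDerivAt {d : ℕ} (u : Eu d → ℝ) (hu : ContDiff ℝ 2 u) (x : Eu d) :
    (∀ z, HasFDerivAt (fun z => u (x + z)) (fderiv ℝ u (x + z)) z) ∧
    (∀ z, HasFDerivAt (fun z => fderiv ℝ u (x + z)) (fderiv ℝ (fderiv ℝ u) (x + z)) z) := by
  have hid : ∀ z : Eu d, HasFDerivAt (fun z : Eu d => x + z)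
      (ContinuousLinearMap.id ℝ (Eu d)) z := fun z => (hasFDerivAt_id z).const_add x
  have hdu : Differentiable ℝ u := hu.differentiable (by norm_num)
  have hdu' : Differentiable ℝ (fderiv ℝ u) :=
    (hu.fderiv_right (m := 1) (by norm_num)).differentiable (by norm_num)
  constructor
  · intro z
    have h := (hdu (x + z)).hasFDerivAt.comp z (hid z)
    simp only [ContinuousLinearMap.comp_id] at h
    exact h
  · intro z
    have h := (hdu' (x + z)).hasFDerivAt.comp z (hid z)
    simp only [ContinuousLinearMap.comp_id] at h
    exact h

lemma measurable_trunc {d : ℕ} : Measurable (trunc (d := d)) := by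
  unfold trunc
  exact Measurable.ite (measurableSet_le measurable_norm measurable_const)
    measurable_id measurable_const

lemma integrand_pointwise {d : ℕ} (g : Eu d → ℝ) (g' : Eu d → (Eu d →L[ℝ] ℝ))
    (g'' : Eu d → (Eu d →L[ℝ] Eu d →L[ℝ] ℝ))
    (h1 : ∀ y, HasFDerivAt g (g' y) y) (h2 : ∀ y, HasFDerivAt g' (g'' y) y)
    {C0 M : ℝ} (hC0 : ∀ z, |g z| ≤ C0) (hM : ∀ y, ‖g'' y‖ ≤ M) (z : Eu d) :
    |g z - g 0 - (g' 0) (trunc z)| ≤ (max M (2*C0)) * min ‖z‖ (‖z‖^2) := by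
  have hC00 : 0 ≤ C0 := (abs_nonneg _).trans (hC0 0)
  by_cases hz : ‖z‖ ≤ 1
  · have htr : trunc z = z := if_pos hz
    have hmin : min ‖z‖ (‖z‖^2) = ‖z‖^2 := min_eq_right (by nlinarith [norm_nonneg z])
    rw [htr, hmin]
    have := taylor2_bound g g' g'' h1 h2 z (fun y _ => hM y)
    have hle : M * ‖z‖^2 ≤ max M (2*C0) * ‖z‖^2 :=
      mul_le_mul_of_nonneg_right (le_max_left _ _) (by positivity)
    linarith
  · push_neg at hz
    have htr : trunc z = 0 := if_neg (not_le.2 hz)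
    have hmin : min ‖z‖ (‖z‖^2) = ‖z‖ := min_eq_left (by nlinarith)
    rw [htr, hmin, map_zero, sub_zero]
    have h1' : |g z - g 0| ≤ 2 * C0 := by
      have := hC0 z; have := hC0 0
      rw [abs_sub_le_iff] at *
      constructor <;> [skip; skip] <;> cases abs_le.1 (hC0 z) <;> cases abs_le.1 (hC0 0) <;> linarith
    have : 2 * C0 ≤ max M (2*C0) * ‖z‖ := by
      calc 2 * C0 = (2*C0) * 1 := by ring
        _ ≤ max M (2*C0) * ‖z‖ :=
          mul_le_mul (le_max_right _ _) hz.le one_pos.le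
            ((le_max_right _ _).trans' (by linarith))
    linarith

/-- locally uniform convergence on `(0,∞) × ℝ^d` with continuous limit transfers to
moving base points, uniformly on a ball. -/
lemma moving_unif {d : ℕ} {V : Type*} [NormedAddCommGroup V]
    (A : ℕ → ℝ × Eu d → V) (B : ℝ × Eu d → V)
    (hA : TendstoLocallyUniformlyOn A B atTop (Set.Ioi 0 ×ˢ Set.univ))
    (hB : ContinuousOn B (Set.Ioi 0 ×ˢ Set.univ))
    {t : ℝ} (ht : 0 < t) {x : Eu d} (tk : ℕ → ℝ) (xk : ℕ → Eu d)
    (htk : Tendsto tk atTop (𝓝 t)) (hxk : Tendsto xk atTop (𝓝 x))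
    (r : ℝ) {ε : ℝ} (hε : 0 < ε) :
    ∀ᶠ k in atTop, ∀ y : Eu d, ‖y‖ ≤ r → ‖A k (tk k, xk k + y) - B (t, x + y)‖ < ε := by
  set S : Set (ℝ × Eu d) := Set.Icc (t/2) (2*t) ×ˢ Metric.closedBall x (|r|+1) with hS
  have hScpt : IsCompact S := isCompact_Icc.prod (isCompact_closedBall _ _)
  have hSsub : S ⊆ Set.Ioi 0 ×ˢ Set.univ := by
    rintro ⟨s, y⟩ ⟨hs, -⟩
    exact ⟨lt_of_lt_of_le (by linarith) hs.1, trivial⟩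
  have hunif : TendstoUniformlyOn A B atTop S :=
    (tendstoLocallyUniformlyOn_iff_forall_isCompact
      ((isOpen_Ioi).prod isOpen_univ)).1 hA S hSsub hScpt
  have hBc : UniformContinuousOn B S :=
    hScpt.uniformContinuousOn_of_continuous (hB.mono hSsub)
  rw [Metric.uniformContinuousOn_iff] at hBc
  obtain ⟨δ, hδ, hδ'⟩ := hBc (ε/2) (by linarith)
  have hA2 := (Metric.tendstoUniformlyOn_iff.1 hunif) (ε/2) (by linarith)
  have h1 : ∀ᶠ k in atTop, dist (tk k) t < min δ (t/2) :=
    Metric.tendsto_nhds.1 htk _ (lt_min hδ (by linarith))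
  have h2 : ∀ᶠ k in atTop, dist (xk k) x < min δ 1 :=
    Metric.tendsto_nhds.1 hxk _ (lt_min hδ one_pos)
  filter_upwards [h1, h2, hA2] with k hk1' hk2 hk3
  intro y hy
  have hk1 : |tk k - t| < min δ (t/2) := by rwa [Real.dist_eq] at hk1'
  have hyr : ‖y‖ ≤ |r| + 1 := by
    have := le_abs_self r; linarith
  have hmem : (t, x + y) ∈ S := by
    constructor
    · constructor <;> [linarith; linarith]
    · simp only [Metric.mem_closedBall, dist_eq_norm, add_sub_cancel_left]; exact hyr
  have hmemk : (tk k, xk k + y) ∈ S := by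
    have h1 := abs_sub_lt_iff.1 (lt_of_lt_of_le hk1 (min_le_right _ _))
    constructor
    · constructor <;> [linarith [h1.1, h1.2]; linarith [h1.1, h1.2]]
    · have : dist (xk k + y) x ≤ dist (xk k) x + ‖y‖ := by
        rw [dist_eq_norm, dist_eq_norm]
        calc ‖xk k + y - x‖ = ‖(xk k - x) + y‖ := by rw [add_sub_right_comm]
          _ ≤ ‖xk k - x‖ + ‖y‖ := norm_add_le _ _
      have h2 := lt_of_lt_of_le hk2 (min_le_right _ _)
      simp only [Metric.mem_closedBall]
      have := le_abs_self r
      linarith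
  have hdist : dist (tk k, xk k + y) (t, x + y) < δ := by
    rw [Prod.dist_eq]
    apply max_lt
    · exact lt_of_lt_of_le hk1' (min_le_left _ _)
    · have : dist (xk k + y) (x + y) = dist (xk k) x := by
        simp [dist_eq_norm, add_sub_add_right_eq_sub]
      rw [this]; exact lt_of_lt_of_le hk2 (min_le_left _ _)
  have e1 : dist (B (tk k, xk k + y)) (A k (tk k, xk k + y)) < ε/2 := hk3 _ hmemk
  have e2 : dist (B (tk k, xk k + y)) (B (t, x + y)) < ε/2 := hδ' _ hmemk _ hmem hdist
  have := (dist_triangle (A k (tk k, xk k + y)) (B (tk k, xk k + y)) (B (t, x + y)))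
  rw [← dist_eq_norm]
  calc dist (A k (tk k, xk k + y)) (B (t, x + y))
      ≤ dist (A k (tk k, xk k + y)) (B (tk k, xk k + y)) + dist (B (tk k, xk k + y)) (B (t, x+y)) := this
    _ < ε/2 + ε/2 := by rw [dist_comm] at e1; exact add_lt_add e1 e2
    _ = ε := by ring

lemma minkey_meas {d : ℕ} : Measurable (fun z : Eu d => ENNReal.ofReal (min ‖z‖ (‖z‖^2))) :=
  (measurable_norm.min (measurable_norm.pow_const 2)).ennreal_ofReal

lemma integrand_integrable {d : ℕ} (g : Eu d → ℝ) (g' : Eu d → (Eu d →L[ℝ] ℝ))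
    (g'' : Eu d → (Eu d →L[ℝ] Eu d →L[ℝ] ℝ))
    (h1 : ∀ y, HasFDerivAt g (g' y) y) (h2 : ∀ y, HasFDerivAt g' (g'' y) y)
    {C0 M : ℝ} (hC0 : ∀ z, |g z| ≤ C0) (hM : ∀ y, ‖g'' y‖ ≤ M)
    (F : Measure (Eu d)) {K : ℝ≥0}
    (hI : ∫⁻ z, ENNReal.ofReal (min ‖z‖ (‖z‖^2)) ∂F ≤ K) :
    Integrable (fun z => g z - g 0 - (g' 0) (trunc z)) F ∧
    |∫ z, (g z - g 0 - (g' 0) (trunc z)) ∂F| ≤ (max M (2*C0)) * K := by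
  set c' := max M (2*C0) with hc'
  have hc'0 : 0 ≤ c' := le_trans ((norm_nonneg (g'' 0)).trans (hM 0)) (le_max_left _ _)
  have hgc : Continuous g := by
    rw [continuous_iff_continuousAt]; exact fun y => (h1 y).continuousAt
  have hmeas : AEStronglyMeasurable (fun z => g z - g 0 - (g' 0) (trunc z)) F := by
    exact (((hgc.measurable.sub measurable_const).sub
      ((g' 0).continuous.measurable.comp measurable_trunc)).aestronglyMeasurable)
  have hptw := integrand_pointwise g g' g'' h1 h2 hC0 hM
  have hlint : (∫⁻ z, ENNReal.ofReal ‖g z - g 0 - (g' 0) (trunc z)‖ ∂F)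
      ≤ ENNReal.ofReal c' * K := by
    calc (∫⁻ z, ENNReal.ofReal ‖g z - g 0 - (g' 0) (trunc z)‖ ∂F)
        ≤ ∫⁻ z, ENNReal.ofReal c' * ENNReal.ofReal (min ‖z‖ (‖z‖^2)) ∂F := by
          apply lintegral_mono; intro z
          dsimp only
          rw [← ENNReal.ofReal_mul hc'0]
          exact ENNReal.ofReal_le_ofReal (by rw [Real.norm_eq_abs]; exact hptw z)
      _ = ENNReal.ofReal c' * ∫⁻ z, ENNReal.ofReal (min ‖z‖ (‖z‖^2)) ∂F :=
          lintegral_const_mul _ minkey_meas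
      _ ≤ ENNReal.ofReal c' * K := mul_le_mul_right hI _
  have hint : Integrable (fun z => g z - g 0 - (g' 0) (trunc z)) F := by
    refine ⟨hmeas, ?_⟩
    rw [hasFiniteIntegral_iff_norm]
    exact lt_of_le_of_lt hlint (by
      exact ENNReal.mul_lt_top ENNReal.ofReal_lt_top ENNReal.coe_lt_top)
  refine ⟨hint, ?_⟩
  calc |∫ z, (g z - g 0 - (g' 0) (trunc z)) ∂F|
      ≤ (∫⁻ z, ENNReal.ofReal ‖g z - g 0 - (g' 0) (trunc z)‖ ∂F).toReal :=
        by simpa [Real.norm_eq_abs] using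
          norm_integral_le_lintegral_norm (μ := F) (fun z => g z - g 0 - (g' 0) (trunc z))
    _ ≤ (ENNReal.ofReal c' * K).toReal := by
        apply ENNReal.toReal_mono _ hlint
        exact (ENNReal.mul_lt_top ENNReal.ofReal_lt_top ENNReal.coe_lt_top).ne
    _ = c' * K := by
        rw [ENNReal.toReal_mul, ENNReal.toReal_ofReal hc'0, ENNReal.coe_toReal]

lemma abs_sSup_sub_sSup_le {ι : Type*} {S : Set ι} (hS : S.Nonempty) {Φ Ψ : ι → ℝ} {δ : ℝ}
    (h : ∀ x ∈ S, |Φ x - Ψ x| ≤ δ) (b1 : BddAbove (Φ '' S)) (b2 : BddAbove (Ψ '' S)) :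
    |sSup (Φ '' S) - sSup (Ψ '' S)| ≤ δ := by
  rw [abs_sub_le_iff]
  constructor
  · rw [sub_le_iff_le_add]
    apply csSup_le (hS.image Φ)
    rintro r ⟨x, hx, rfl⟩
    have h1 := (abs_sub_le_iff.1 (h x hx)).1
    have h2 : Ψ x ≤ sSup (Ψ '' S) := le_csSup b2 ⟨x, hx, rfl⟩
    linarith
  · rw [sub_le_iff_le_add]
    apply csSup_le (hS.image Ψ)
    rintro r ⟨x, hx, rfl⟩
    have h1 := (abs_sub_le_iff.1 (h x hx)).2
    have h2 : Φ x ≤ sSup (Φ '' S) := le_csSup b1 ⟨x, hx, rfl⟩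
    linarith

lemma integral_diff_bound {d : ℕ} (F : Measure (Eu d)) {K : ℝ≥0}
    (hI : ∫⁻ z, ENNReal.ofReal (min ‖z‖ (‖z‖^2)) ∂F ≤ K)
    (J1 J2 : Eu d → ℝ) (hJ1 : Integrable J1 F) (hJ2 : Integrable J2 F)
    {η₁ η₂ C R e1 e2 e3 : ℝ} (hR : 1 ≤ R)
    (hP1 : ∀ z : Eu d, ‖z‖ ≤ 1 → |J1 z - J2 z| ≤ η₁ * ‖z‖^2)
    (hP2 : ∀ z : Eu d, 1 < ‖z‖ → ‖z‖ ≤ R → |J1 z - J2 z| ≤ η₂)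
    (hP3 : ∀ z : Eu d, R < ‖z‖ → |J1 z - J2 z| ≤ C)
    (hη₁ : 0 ≤ η₁) (hη₂ : 0 ≤ η₂) (hC : 0 ≤ C)
    (he1 : η₁ * K ≤ e1) (he2 : η₂ * K ≤ e2) (he3 : C * ((K : ℝ) / R) ≤ e3) :
    |∫ z, J1 z ∂F - ∫ z, J2 z ∂F| ≤ e1 + e2 + e3 := by
  have hR0 : (0:ℝ) < R := lt_of_lt_of_le one_pos hR
  have he1' : 0 ≤ e1 := le_trans (by positivity) he1
  have he2' : 0 ≤ e2 := le_trans (by positivity) he2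
  have he3' : 0 ≤ e3 := le_trans (by positivity) he3
  set W : Eu d → ℝ≥0∞ := fun z => ENNReal.ofReal |J1 z - J2 z| with hW
  set S1 : Set (Eu d) := {z | ‖z‖ ≤ 1}
  set S2 : Set (Eu d) := {z | 1 < ‖z‖ ∧ ‖z‖ ≤ R}
  set S3 : Set (Eu d) := {z | R < ‖z‖}
  have hKof : (K : ℝ≥0∞) = ENNReal.ofReal (K : ℝ) := (ENNReal.ofReal_coe_nnreal).symm
  -- piece 1
  have hp1 : ∫⁻ z in S1, W z ∂F ≤ ENNReal.ofReal e1 := by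
    have hm : Measurable fun z : Eu d => ENNReal.ofReal (η₁ * min ‖z‖ (‖z‖^2)) :=
      ((measurable_norm.min (measurable_norm.pow_const 2)).const_mul η₁).ennreal_ofReal
    calc ∫⁻ z in S1, W z ∂F
        ≤ ∫⁻ z in S1, ENNReal.ofReal (η₁ * min ‖z‖ (‖z‖^2)) ∂F := by
          apply setLIntegral_mono hm
          intro z hz
          apply ENNReal.ofReal_le_ofReal
          have hmin : min ‖z‖ (‖z‖^2) = ‖z‖^2 := min_eq_right (by
            have : ‖z‖ ≤ 1 := hz
            nlinarith [norm_nonneg z])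
          rw [hmin]; exact hP1 z hz
      _ ≤ ∫⁻ z, ENNReal.ofReal (η₁ * min ‖z‖ (‖z‖^2)) ∂F := setLIntegral_le_lintegral _ _
      _ = ENNReal.ofReal η₁ * ∫⁻ z, ENNReal.ofReal (min ‖z‖ (‖z‖^2)) ∂F := by
          simp_rw [ENNReal.ofReal_mul hη₁]
          exact lintegral_const_mul _ minkey_meas
      _ ≤ ENNReal.ofReal η₁ * K := mul_le_mul_right hI _
      _ ≤ ENNReal.ofReal e1 := by
          rw [hKof, ← ENNReal.ofReal_mul hη₁]
          exact ENNReal.ofReal_le_ofReal he1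
  -- F S2 ≤ K
  have hFS2 : F S2 ≤ (K : ℝ≥0∞) := by
    calc F S2 = ∫⁻ _ in S2, 1 ∂F := (setLIntegral_one _).symm
      _ ≤ ∫⁻ z in S2, ENNReal.ofReal (min ‖z‖ (‖z‖^2)) ∂F := by
          apply setLIntegral_mono minkey_meas
          rintro z ⟨hz1, _⟩
          rw [show (1:ℝ≥0∞) = ENNReal.ofReal 1 by simp]
          apply ENNReal.ofReal_le_ofReal
          exact le_min hz1.le (by nlinarith)
      _ ≤ _ := (setLIntegral_le_lintegral _ _).trans hI
  have hp2 : ∫⁻ z in S2, W z ∂F ≤ ENNReal.ofReal e2 := by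
    calc ∫⁻ z in S2, W z ∂F ≤ ∫⁻ _ in S2, ENNReal.ofReal η₂ ∂F := by
          apply setLIntegral_mono measurable_const
          rintro z ⟨hz1, hz2⟩
          exact ENNReal.ofReal_le_ofReal (hP2 z hz1 hz2)
      _ = ENNReal.ofReal η₂ * F S2 := setLIntegral_const _ _
      _ ≤ ENNReal.ofReal η₂ * K := mul_le_mul_right hFS2 _
      _ ≤ ENNReal.ofReal e2 := by
          rw [hKof, ← ENNReal.ofReal_mul hη₂]
          exact ENNReal.ofReal_le_ofReal he2
  -- F S3 ≤ K / R
  have hFS3 : F S3 ≤ (K : ℝ≥0∞) / ENNReal.ofReal R := by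
    rw [ENNReal.le_div_iff_mul_le (Or.inl (by simp [hR0])) (Or.inl ENNReal.ofReal_ne_top)]
    calc F S3 * ENNReal.ofReal R = ∫⁻ _ in S3, ENNReal.ofReal R ∂F := by
          rw [setLIntegral_const, mul_comm]
      _ ≤ ∫⁻ z in S3, ENNReal.ofReal (min ‖z‖ (‖z‖^2)) ∂F := by
          apply setLIntegral_mono minkey_meas
          intro z hz
          apply ENNReal.ofReal_le_ofReal
          have hz' : R < ‖z‖ := hz
          exact le_min (by linarith) (by nlinarith)
      _ ≤ _ := (setLIntegral_le_lintegral _ _).trans hI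
  have hp3 : ∫⁻ z in S3, W z ∂F ≤ ENNReal.ofReal e3 := by
    calc ∫⁻ z in S3, W z ∂F ≤ ∫⁻ _ in S3, ENNReal.ofReal C ∂F := by
          apply setLIntegral_mono measurable_const
          intro z hz
          exact ENNReal.ofReal_le_ofReal (hP3 z hz)
      _ = ENNReal.ofReal C * F S3 := setLIntegral_const _ _
      _ ≤ ENNReal.ofReal C * ((K : ℝ≥0∞) / ENNReal.ofReal R) := mul_le_mul_right hFS3 _
      _ = ENNReal.ofReal (C * ((K:ℝ) / R)) := by
          rw [hKof, ← ENNReal.ofReal_div_of_pos hR0, ← ENNReal.ofReal_mul hC]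
      _ ≤ ENNReal.ofReal e3 := ENNReal.ofReal_le_ofReal he3
  -- splitting
  have hsub : (Set.univ : Set (Eu d)) ⊆ S1 ∪ (S2 ∪ S3) := by
    intro z _
    rcases le_or_gt ‖z‖ 1 with h | h
    · exact Or.inl h
    · rcases le_or_gt ‖z‖ R with h' | h'
      · exact Or.inr (Or.inl ⟨h, h'⟩)
      · exact Or.inr (Or.inr h')
  have htot : ∫⁻ z, W z ∂F ≤ ENNReal.ofReal (e1 + e2 + e3) := by
    calc ∫⁻ z, W z ∂F = ∫⁻ z in Set.univ, W z ∂F := by rw [setLIntegral_univ]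
      _ ≤ ∫⁻ z in S1 ∪ (S2 ∪ S3), W z ∂F := lintegral_mono_set hsub
      _ ≤ ∫⁻ z in S1, W z ∂F + (∫⁻ z in S2, W z ∂F + ∫⁻ z in S3, W z ∂F) :=
          (lintegral_union_le _ _ _).trans (add_le_add_right (lintegral_union_le _ _ _) _)
      _ ≤ ENNReal.ofReal e1 + (ENNReal.ofReal e2 + ENNReal.ofReal e3) :=
          add_le_add hp1 (add_le_add hp2 hp3)
      _ = ENNReal.ofReal (e1 + e2 + e3) := by
          rw [← ENNReal.ofReal_add he2' he3', ← ENNReal.ofReal_add he1' (by positivity)]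
          ring_nf
  calc |∫ z, J1 z ∂F - ∫ z, J2 z ∂F| = |∫ z, (J1 z - J2 z) ∂F| := by
        rw [integral_sub hJ1 hJ2]
    _ ≤ (∫⁻ z, W z ∂F).toReal := by
        simpa [Real.norm_eq_abs, hW] using
          norm_integral_le_lintegral_norm (μ := F) (fun z => J1 z - J2 z)
    _ ≤ (ENNReal.ofReal (e1 + e2 + e3)).toReal :=
        ENNReal.toReal_mono ENNReal.ofReal_ne_top htot
    _ = e1 + e2 + e3 := ENNReal.toReal_ofReal (by positivity)

lemma abs_sum_mul_le {d : ℕ} (u v : Eu d) : |∑ i, u i * v i| ≤ ‖u‖ * ‖v‖ := by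
  have h : (∑ i, u i * v i) = (inner ℝ u v : ℝ) := by
    rw [PiLp.inner_apply]
    simp [RCLike.inner_apply, mul_comm]
  rw [h]
  exact abs_real_inner_le_norm u v

lemma trace_abs_le {d : ℕ} (A c : Matrix (Fin d) (Fin d) ℝ) {δ : ℝ}
    (hA : ∀ i j, |A i j| ≤ δ) :
    |(A * c).trace| ≤ δ * ∑ i, ∑ j, |c i j| := by
  have step : ∀ i j, |A i j * c j i| ≤ δ * |c j i| := by
    intro i j
    rw [abs_mul]
    exact mul_le_mul_of_nonneg_right (hA i j) (abs_nonneg _)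
  calc |(A * c).trace| = |∑ i, ∑ j, A i j * c j i| := by
        simp [Matrix.trace, Matrix.diag, Matrix.mul_apply]
    _ ≤ ∑ i, |∑ j, A i j * c j i| := Finset.abs_sum_le_sum_abs _ _
    _ ≤ ∑ i, ∑ j, |A i j * c j i| :=
        Finset.sum_le_sum fun i _ => Finset.abs_sum_le_sum_abs _ _
    _ ≤ ∑ i, ∑ j, δ * |c j i| :=
        Finset.sum_le_sum fun i _ => Finset.sum_le_sum fun j _ => step i j
    _ = δ * ∑ j, ∑ i, |c j i| := by rw [Finset.sum_comm]; simp [Finset.mul_sum]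
    _ = δ * ∑ i, ∑ j, |c i j| := rfl

abbrev TripT (d : ℕ) := Eu d × Matrix (Fin d) (Fin d) ℝ × Measure (Eu d)

lemma bounds_extract {d : ℕ} {K : ℝ≥0} {x : TripT d}
    (h : (∫⁻ z, ENNReal.ofReal (min ‖z‖ (‖z‖ ^ 2)) ∂x.2.2)
      + ENNReal.ofReal ‖x.1‖ + ∑ i, ∑ j, ENNReal.ofReal |x.2.1 i j| ≤ K) :
    (∫⁻ z, ENNReal.ofReal (min ‖z‖ (‖z‖ ^ 2)) ∂x.2.2 ≤ K) ∧ ‖x.1‖ ≤ (K : ℝ) ∧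
      (∑ i, ∑ j, |x.2.1 i j|) ≤ (K : ℝ) := by
  have key : ∀ a : ℝ, 0 ≤ a → ENNReal.ofReal a ≤ (K : ℝ≥0∞) → a ≤ (K : ℝ) := by
    intro a _ ha
    rw [← ENNReal.ofReal_coe_nnreal] at ha
    exact (ENNReal.ofReal_le_ofReal_iff K.coe_nonneg).1 ha
  set I := ∫⁻ z, ENNReal.ofReal (min ‖z‖ (‖z‖ ^ 2)) ∂x.2.2 with hIdef
  set B := ENNReal.ofReal ‖x.1‖ with hBdef
  set S := ∑ i, ∑ j, ENNReal.ofReal |x.2.1 i j| with hSdef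
  have hIle : I ≤ I + B + S := by
    have : I + 0 + 0 ≤ I + B + S := by gcongr <;> exact zero_le
    simpa using this
  have hBle : B ≤ I + B + S := by
    have : 0 + B + 0 ≤ I + B + S := by gcongr <;> exact zero_le
    simpa using this
  have hSle : S ≤ I + B + S := by
    have : 0 + 0 + S ≤ I + B + S := by gcongr <;> exact zero_le
    simpa using this
  refine ⟨le_trans hIle h, key _ (norm_nonneg _) (le_trans hBle h), key _ (by positivity) ?_⟩
  have hsum : ENNReal.ofReal (∑ i, ∑ j, |x.2.1 i j|) = S := by
    rw [ENNReal.ofReal_sum_of_nonneg (fun i _ => by positivity)]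
    exact Finset.sum_congr rfl fun i _ => ENNReal.ofReal_sum_of_nonneg (fun j _ => abs_nonneg _)
  rw [hsum]
  exact le_trans hSle h


def PhiT {d : ℕ} (p : Eu d) (q : Matrix (Fin d) (Fin d) ℝ) (g : Eu d → ℝ) (x : TripT d) : ℝ :=
  (∑ i, p i * x.1 i) + (1 / 2) * (q * x.2.1).trace
    + ∫ z, (g z - g 0 - fderiv ℝ g 0 (trunc z)) ∂x.2.2

lemma Gop_eq {d : ℕ} (Θ : Set (TripT d)) (p : Eu d) (q : Matrix (Fin d) (Fin d) ℝ)
    (g : Eu d → ℝ) : Gop Θ p q g = sSup (PhiT p q g '' Θ) := by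
  unfold Gop PhiT
  congr 1
  ext r
  constructor
  · rintro ⟨x, hx, hr⟩; exact ⟨x, hx, hr.symm⟩
  · rintro ⟨x, hx, hr⟩; exact ⟨x, hx, hr.symm⟩

lemma phiT_bddAbove {d : ℕ} {Θ : Set (TripT d)} {K : ℝ≥0}
    (hKb : ∀ x ∈ Θ, (∫⁻ z, ENNReal.ofReal (min ‖z‖ (‖z‖ ^ 2)) ∂x.2.2)
      + ENNReal.ofReal ‖x.1‖ + ∑ i, ∑ j, ENNReal.ofReal |x.2.1 i j| ≤ K)
    (p : Eu d) (q : Matrix (Fin d) (Fin d) ℝ) (g : Eu d → ℝ)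
    (g' : Eu d → (Eu d →L[ℝ] ℝ)) (g'' : Eu d → (Eu d →L[ℝ] Eu d →L[ℝ] ℝ))
    (h1 : ∀ y, HasFDerivAt g (g' y) y) (h2 : ∀ y, HasFDerivAt g' (g'' y) y)
    {C0 M : ℝ} (hC0 : ∀ z, |g z| ≤ C0) (hM : ∀ y, ‖g'' y‖ ≤ M) :
    BddAbove (PhiT p q g '' Θ) := by
  refine ⟨‖p‖ * K + (1/2) * ((∑ i, ∑ j, |q i j|) * K) + (max M (2*C0)) * K, ?_⟩
  rintro r ⟨x, hx, rfl⟩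
  obtain ⟨hI, hb, hc⟩ := bounds_extract (hKb x hx)
  have hfd : fderiv ℝ g 0 = g' 0 := (h1 0).fderiv
  obtain ⟨-, hint⟩ := integrand_integrable g g' g'' h1 h2 hC0 hM x.2.2 hI
  simp only [PhiT, hfd]
  have t1 : (∑ i, p i * x.1 i) ≤ ‖p‖ * (K : ℝ) :=
    le_trans (le_abs_self _)
      ((abs_sum_mul_le p x.1).trans (mul_le_mul_of_nonneg_left hb (norm_nonneg _)))
  have t2 : (1/2) * (q * x.2.1).trace ≤ (1/2) * ((∑ i, ∑ j, |q i j|) * (K : ℝ)) := by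
    have hq : ∀ i j, |q i j| ≤ ∑ i, ∑ j, |q i j| := by
      intro i j
      calc |q i j| ≤ ∑ j', |q i j'| :=
            Finset.single_le_sum (f := fun j' => |q i j'|) (fun _ _ => abs_nonneg _)
              (Finset.mem_univ j)
        _ ≤ ∑ i', ∑ j', |q i' j'| :=
            Finset.single_le_sum (f := fun i' => ∑ j', |q i' j'|)
              (fun _ _ => Finset.sum_nonneg fun _ _ => abs_nonneg _) (Finset.mem_univ i)
    have htr := trace_abs_le q x.2.1 hq
    have h2' : |(q * x.2.1).trace| ≤ (∑ i, ∑ j, |q i j|) * (K : ℝ) :=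
      htr.trans (mul_le_mul_of_nonneg_left hc (by positivity))
    have := le_abs_self ((q * x.2.1).trace)
    linarith
  have t3 : (∫ z, (g z - g 0 - (g' 0) (trunc z)) ∂x.2.2) ≤ (max M (2*C0)) * (K : ℝ) :=
    le_trans (le_abs_self _) hint
  linarith

lemma abs_triple_sub {a1 a2 a3 b1 b2 b3 e1 e2 e3 : ℝ}
    (h1 : |a1 - b1| ≤ e1) (h2 : |a2 - b2| ≤ e2) (h3 : |a3 - b3| ≤ e3) :
    |(a1 + a2 + a3) - (b1 + b2 + b3)| ≤ e1 + e2 + e3 := by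
  have heq : (a1 + a2 + a3) - (b1 + b2 + b3) = (a1 - b1) + ((a2 - b2) + (a3 - b3)) := by ring
  rw [heq]
  calc |(a1 - b1) + ((a2 - b2) + (a3 - b3))|
      ≤ |a1 - b1| + |(a2 - b2) + (a3 - b3)| := abs_add_le _ _
    _ ≤ |a1 - b1| + (|a2 - b2| + |a3 - b3|) := by
        have := abs_add_le (a2 - b2) (a3 - b3); linarith
    _ ≤ e1 + e2 + e3 := by linarith

set_option maxHeartbeats 2000000

/-- **Statement 9** (Condition (C1) for `G`): continuity of the nonlinearity `G` along
suitable sequences. -/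
theorem G_condition_C1 {d : ℕ}
    (Θ : Set (Eu d × Matrix (Fin d) (Fin d) ℝ × Measure (Eu d)))
    (hne : Θ.Nonempty) (hmeas : MeasurableSet Θ) (htrip : IsLevyTripletSet Θ)
    (hK : HasUniformBound Θ)
    (tk : ℕ → ℝ) (xk : ℕ → Eu d) (pk : ℕ → Eu d) (qk : ℕ → Matrix (Fin d) (Fin d) ℝ)
    {t : ℝ} (ht : 0 < t) (x : Eu d) (p : Eu d) (q : Matrix (Fin d) (Fin d) ℝ)
    (hqsym : q.IsSymm) (hqksym : ∀ k, (qk k).IsSymm) (htk0 : ∀ k, 0 < tk k)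
    (htk : Tendsto tk atTop (nhds t)) (hxk : Tendsto xk atTop (nhds x))
    (hpk : Tendsto pk atTop (nhds p)) (hqk : Tendsto qk atTop (nhds q))
    (fk : ℕ → ℝ → Eu d → ℝ) (f : ℝ → Eu d → ℝ)
    (hfk : ∀ k, IsC12b (fk k)) (hf : IsC12b f)
    (hconv : TendstoLocallyUniformly (fun k z => fk k (tk k) (xk k + z))
      (fun z => f t (x + z)) atTop)
    (hD1 : TendstoLocallyUniformlyOn
      (fun k (pt : ℝ × Eu d) => fderiv ℝ (fk k pt.1) pt.2)
      (fun pt => fderiv ℝ (f pt.1) pt.2) atTop (Set.Ioi 0 ×ˢ Set.univ))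
    (hD2 : TendstoLocallyUniformlyOn
      (fun k (pt : ℝ × Eu d) => fderiv ℝ (fderiv ℝ (fk k pt.1)) pt.2)
      (fun pt => fderiv ℝ (fderiv ℝ (f pt.1)) pt.2) atTop (Set.Ioi 0 ×ˢ Set.univ))
    (hub : ∃ C, ∀ k s y, |fk k s y| ≤ C) :
    Tendsto (fun k => Gop Θ (pk k) (qk k) (fun z => fk k (tk k) (xk k + z))) atTop
      (nhds (Gop Θ p q (fun z => f t (x + z)))) := by
  classical
  obtain ⟨K, hKb⟩ := hK
  obtain ⟨C1, hC1⟩ := hub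
  obtain ⟨Cf, hCf⟩ := hf.2
  have hC10 : 0 ≤ C1 := (abs_nonneg _).trans (hC1 0 0 0)
  have hCf0 : 0 ≤ Cf := (abs_nonneg _).trans (hCf t ht 0).1
  set Kr : ℝ := (K : ℝ) with hKrdef
  have hKr0 : 0 ≤ Kr := K.coe_nonneg
  set C₀ : ℝ := max C1 Cf with hC₀def
  have hC₀0 : 0 ≤ C₀ := le_trans hC10 (le_max_left _ _)
  -- limit-function derivative data
  have hu2 : ContDiff ℝ 2 (f t) := hf.1.2.2.1 t ht
  obtain ⟨hg1, hg2⟩ := translate_hasFDerivAt (f t) hu2 x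
  have hgC0 : ∀ z, |f t (x + z)| ≤ C₀ := fun z =>
    le_trans (hCf t ht (x + z)).1 (le_max_right _ _)
  have hgM : ∀ y, ‖fderiv ℝ (fderiv ℝ (f t)) (x + y)‖ ≤ C₀ := fun y =>
    le_trans (hCf t ht (x + y)).2.2.2 (le_max_right _ _)
  rw [Metric.tendsto_nhds]
  intro ε hε
  set ε' : ℝ := ε / 2 with hε'def
  have hε'0 : 0 < ε' := half_pos hε
  set R : ℝ := max 1 (24 * (C₀ + 1) * (Kr + 1) / ε') with hRdef
  have hR1 : 1 ≤ R := le_max_left _ _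
  have hR0 : 0 < R := lt_of_lt_of_le one_pos hR1
  have hRkey : (4 * C₀) * (Kr / R) ≤ ε' / 6 := by
    have h2 : 24 * (C₀ + 1) * (Kr + 1) / ε' ≤ R := le_max_right _ _
    rw [div_le_iff₀ hε'0] at h2
    rw [mul_div_assoc'] at *
    rw [div_le_div_iff₀ hR0 (by norm_num : (0:ℝ) < 6)]
    nlinarith [hC₀0, hKr0, hε'0.le, hR0.le]
  set η₁ : ℝ := ε' / (6 * (Kr + 1)) with hη₁def
  set η₂ : ℝ := ε' / (12 * (Kr + 1)) with hη₂def
  have hη₁0 : 0 < η₁ := by positivity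
  have hη₂0 : 0 < η₂ := by positivity
  set δq : ℝ := ε' / (2 * (Kr + 1)) with hδqdef
  have hδq0 : 0 < δq := by positivity
  set δp : ℝ := ε' / (4 * (Kr + 1)) with hδpdef
  have hδp0 : 0 < δp := by positivity
  -- eventual statements
  have ED2 : ∀ᶠ k in atTop, ∀ y : Eu d, ‖y‖ ≤ 1 →
      ‖fderiv ℝ (fderiv ℝ (fk k (tk k))) (xk k + y)
        - fderiv ℝ (fderiv ℝ (f t)) (x + y)‖ < η₁ := by
    have := moving_unif (fun k pt => fderiv ℝ (fderiv ℝ (fk k pt.1)) pt.2)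
      (fun pt => fderiv ℝ (fderiv ℝ (f pt.1)) pt.2) hD2 hf.1.2.2.2.2 ht tk xk htk hxk 1 hη₁0
    simpa using this
  have Eg : ∀ᶠ k in atTop, ∀ y : Eu d, ‖y‖ ≤ R →
      |fk k (tk k) (xk k + y) - f t (x + y)| < η₂ := by
    have hcpt : IsCompact (Metric.closedBall (0 : Eu d) R) := isCompact_closedBall _ _
    have huo : TendstoUniformlyOn (fun k z => fk k (tk k) (xk k + z))
        (fun z => f t (x + z)) atTop (Metric.closedBall 0 R) :=
      (tendstoLocallyUniformly_iff_forall_isCompact.1 hconv) _ hcpt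
    filter_upwards [(Metric.tendstoUniformlyOn_iff.1 huo) η₂ hη₂0] with k hk y hy
    have := hk y (by simpa [Metric.mem_closedBall, dist_zero_right] using hy)
    rw [Real.dist_eq, abs_sub_comm] at this
    exact this
  have Ep : ∀ᶠ k in atTop, dist (pk k) p < δp := Metric.tendsto_nhds.1 hpk δp hδp0
  have Eq' : ∀ᶠ k in atTop, ∀ i j, |qk k i j - q i j| < δq := by
    refine eventually_all.2 fun i => eventually_all.2 fun j => ?_
    have h1 : Tendsto (fun k => qk k i j) atTop (nhds (q i j)) := by
      have h0 := tendsto_pi_nhds.1 hqk i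
      exact tendsto_pi_nhds.1 h0 j
    filter_upwards [Metric.tendsto_nhds.1 h1 δq hδq0] with k hk
    rwa [Real.dist_eq] at hk
  filter_upwards [ED2, Eg, Ep, Eq'] with k hk1 hk2 hk3 hk4
  -- per-k data
  have hu2k : ContDiff ℝ 2 (fk k (tk k)) := (hfk k).1.2.2.1 (tk k) (htk0 k)
  obtain ⟨hgk1, hgk2⟩ := translate_hasFDerivAt (fk k (tk k)) hu2k (xk k)
  obtain ⟨Ck, hCk⟩ := (hfk k).2
  have hgkC0 : ∀ z, |fk k (tk k) (xk k + z)| ≤ C₀ := fun z =>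
    le_trans (hC1 k (tk k) (xk k + z)) (le_max_left _ _)
  have hgkM : ∀ y, ‖fderiv ℝ (fderiv ℝ (fk k (tk k))) (xk k + y)‖ ≤ Ck := fun y =>
    (hCk (tk k) (htk0 k) (xk k + y)).2.2.2
  rw [Real.dist_eq, Gop_eq, Gop_eq]
  have hfd : fderiv ℝ (fun z => f t (x + z)) 0 = fderiv ℝ (f t) (x + 0) := (hg1 0).fderiv
  have hfdk : fderiv ℝ (fun z => fk k (tk k) (xk k + z)) 0
      = fderiv ℝ (fk k (tk k)) (xk k + 0) := (hgk1 0).fderiv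
  have key : ∀ ξ ∈ Θ, |PhiT (pk k) (qk k) (fun z => fk k (tk k) (xk k + z)) ξ
      - PhiT p q (fun z => f t (x + z)) ξ| ≤ ε' := by
    intro ξ hξ
    obtain ⟨hI, hbb, hcc⟩ := bounds_extract (hKb ξ hξ)
    obtain ⟨hintk, -⟩ := integrand_integrable _ _ _ hgk1 hgk2 hgkC0 hgkM ξ.2.2 hI
    obtain ⟨hint, -⟩ := integrand_integrable _ _ _ hg1 hg2 hgC0 hgM ξ.2.2 hI
    simp only [PhiT, hfd, hfdk]
    have hT1 : |(∑ i, pk k i * ξ.1 i) - ∑ i, p i * ξ.1 i| ≤ ε' / 4 := by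
      have heq : (∑ i, pk k i * ξ.1 i) - ∑ i, p i * ξ.1 i
          = ∑ i, (pk k - p) i * ξ.1 i := by
        rw [← Finset.sum_sub_distrib]
        exact Finset.sum_congr rfl fun i _ => by
          have : (pk k - p) i = pk k i - p i := rfl
          rw [this, sub_mul]
      rw [heq]
      have hd : ‖pk k - p‖ < δp := by rwa [dist_eq_norm] at hk3
      calc |∑ i, (pk k - p) i * ξ.1 i| ≤ ‖pk k - p‖ * ‖ξ.1‖ := abs_sum_mul_le _ _
        _ ≤ δp * Kr := mul_le_mul hd.le hbb (norm_nonneg _) hδp0.le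
        _ ≤ ε' / 4 := by
            rw [hδpdef, div_mul_eq_mul_div, div_le_div_iff₀ (by positivity) (by norm_num)]
            nlinarith [hε'0.le, hKr0]
    have hT2 : |(1/2) * (qk k * ξ.2.1).trace - (1/2) * (q * ξ.2.1).trace| ≤ ε' / 4 := by
      have heq : (1/2) * (qk k * ξ.2.1).trace - (1/2) * (q * ξ.2.1).trace
          = (1/2) * ((qk k - q) * ξ.2.1).trace := by
        rw [Matrix.sub_mul, Matrix.trace_sub]; ring
      rw [heq, abs_mul]
      have habs : ∀ i j, |(qk k - q) i j| ≤ δq := fun i j => by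
        have : (qk k - q) i j = qk k i j - q i j := rfl
        rw [this]; exact (hk4 i j).le
      have htr := trace_abs_le (qk k - q) ξ.2.1 habs
      have hb2 : |((qk k - q) * ξ.2.1).trace| ≤ δq * Kr :=
        htr.trans (mul_le_mul_of_nonneg_left hcc hδq0.le)
      have hdq : δq * Kr ≤ ε' / 2 := by
        rw [hδqdef, div_mul_eq_mul_div, div_le_div_iff₀ (by positivity) (by norm_num)]
        nlinarith [hε'0.le, hKr0]
      rw [abs_of_pos (by norm_num : (0:ℝ) < 1/2)]
      linarith
    have hT3 : |(∫ z, (fk k (tk k) (xk k + z) - fk k (tk k) (xk k + 0)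
          - (fderiv ℝ (fk k (tk k)) (xk k + 0)) (trunc z)) ∂ξ.2.2)
        - ∫ z, (f t (x + z) - f t (x + 0)
          - (fderiv ℝ (f t) (x + 0)) (trunc z)) ∂ξ.2.2| ≤ ε' / 2 := by
      have hP1 : ∀ z : Eu d, ‖z‖ ≤ 1 →
          |(fk k (tk k) (xk k + z) - fk k (tk k) (xk k + 0)
            - (fderiv ℝ (fk k (tk k)) (xk k + 0)) (trunc z))
          - (f t (x + z) - f t (x + 0) - (fderiv ℝ (f t) (x + 0)) (trunc z))|
          ≤ η₁ * ‖z‖ ^ 2 := by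
        intro z hz
        have htr : trunc z = z := if_pos hz
        rw [htr]
        have hT := taylor2_bound (fun y => fk k (tk k) (xk k + y) - f t (x + y))
          (fun y => fderiv ℝ (fk k (tk k)) (xk k + y) - fderiv ℝ (f t) (x + y))
          (fun y => fderiv ℝ (fderiv ℝ (fk k (tk k))) (xk k + y)
            - fderiv ℝ (fderiv ℝ (f t)) (x + y))
          (fun y => (hgk1 y).sub (hg1 y)) (fun y => (hgk2 y).sub (hg2 y))
          z (fun y hy => (hk1 y (le_trans hy hz)).le)
        simp only [ContinuousLinearMap.sub_apply] at hT
        convert hT using 2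
        ring
      have hP2 : ∀ z : Eu d, 1 < ‖z‖ → ‖z‖ ≤ R →
          |(fk k (tk k) (xk k + z) - fk k (tk k) (xk k + 0)
            - (fderiv ℝ (fk k (tk k)) (xk k + 0)) (trunc z))
          - (f t (x + z) - f t (x + 0) - (fderiv ℝ (f t) (x + 0)) (trunc z))|
          ≤ 2 * η₂ := by
        intro z h1z h2z
        have htr : trunc z = 0 := if_neg (not_le.2 h1z)
        rw [htr]
        simp only [map_zero, sub_zero]
        have e1 := hk2 z h2z
        have e2 := hk2 0 (by simp; exact le_trans zero_le_one hR1)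
        have e1' := abs_le.1 e1.le
        have e2' := abs_le.1 e2.le
        rw [abs_le]
        constructor <;> [skip; skip] <;>
          · have := e1'.1; have := e1'.2; have := e2'.1; have := e2'.2; linarith
      have hP3 : ∀ z : Eu d, R < ‖z‖ →
          |(fk k (tk k) (xk k + z) - fk k (tk k) (xk k + 0)
            - (fderiv ℝ (fk k (tk k)) (xk k + 0)) (trunc z))
          - (f t (x + z) - f t (x + 0) - (fderiv ℝ (f t) (x + 0)) (trunc z))|
          ≤ 4 * C₀ := by
        intro z hz
        have htr : trunc z = 0 := if_neg (not_le.2 (lt_of_le_of_lt hR1 hz))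
        rw [htr]
        simp only [map_zero, sub_zero]
        have a1 := abs_le.1 (hgkC0 z)
        have a2 := abs_le.1 (hgkC0 0)
        have a3 := abs_le.1 (hgC0 z)
        have a4 := abs_le.1 (hgC0 0)
        rw [abs_le]
        constructor <;>
          · have := a1.1; have := a1.2; have := a2.1; have := a2.2
            have := a3.1; have := a3.2; have := a4.1; have := a4.2; linarith
      have he1 : η₁ * Kr ≤ ε' / 6 := by
        rw [hη₁def, div_mul_eq_mul_div, div_le_div_iff₀ (by positivity) (by norm_num)]
        nlinarith [hε'0.le, hKr0]
      have he2 : (2 * η₂) * Kr ≤ ε' / 6 := by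
        rw [hη₂def]
        rw [show 2 * (ε' / (12 * (Kr + 1))) * Kr = (2 * ε' * Kr) / (12 * (Kr + 1)) by ring]
        rw [div_le_div_iff₀ (by positivity) (by norm_num)]
        nlinarith [hε'0.le, hKr0]
      have hbig := integral_diff_bound ξ.2.2 hI _ _ hintk hint hR1
        hP1 hP2 hP3 hη₁0.le (by linarith) (by linarith) he1 he2 hRkey
      linarith
    have := abs_triple_sub hT1 hT2 hT3
    linarith
  have b1 : BddAbove (PhiT (pk k) (qk k) (fun z => fk k (tk k) (xk k + z)) '' Θ) :=
    phiT_bddAbove hKb _ _ _ _ _ hgk1 hgk2 hgkC0 hgkM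
  have b2 : BddAbove (PhiT p q (fun z => f t (x + z)) '' Θ) :=
    phiT_bddAbove hKb _ _ _ _ _ hg1 hg2 hgC0 hgM
  have hfin := abs_sSup_sub_sSup_le hne key b1 b2
  calc |sSup (PhiT (pk k) (qk k) (fun z => fk k (tk k) (xk k + z)) '' Θ)
      - sSup (PhiT p q (fun z => f t (x + z)) '' Θ)| ≤ ε' := hfin
    _ < ε := by rw [hε'def]; linarith
end
end

section
/- (Condition (C9) for G^κ.) Let Θ be a nonempty measurable set of Lévy triplets with 𝒦 := sup_{(b,c,F)∈Θ} { ∫_{ℝ^d} |z|∧|z|² F(dz) + |b| + |c| } < ∞ and such that 𝒦_ε := sup_{F ∈ Θ₃} ∫_{|z|≤ε} |z|² F(dz) → 0 as ε → 0, where Θ₃ is the projection of Θ onto 𝓛, and let G^κ, κ ∈ (0,1), be the associated approximating nonlinearities. Let (t,x,p,q) ∈ (0,∞)×ℝ^d×ℝ^d×S^d, let f be a bounded upper or lower semicontinuous function on (0,∞)×ℝ^d, and let g_1, g_2 ∈ C^{1,2}((0,∞)×ℝ^d) satisfy D_x g_1(t,x) = D_x g_2(t,x). Then lim_{κ→0}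 |G^κ(p,q, f(t,x+·), g_1(t,x+·)) − G^κ(p,q, f(t,x+·), g_2(t,x+·))| = 0. -/
open MeasureTheory Filter Set
open scoped NNReal ENNReal Topology

noncomputable section

/-- Comparison of suprema of two pointwise close families. -/
lemma abs_csSup_sub_csSup_le {ι : Type*} {S : Set ι} (hS : S.Nonempty)
    (r₁ r₂ : ι → ℝ) {ε : ℝ} (h : ∀ θ ∈ S, |r₁ θ - r₂ θ| ≤ ε) :
    |sSup {y : ℝ | ∃ θ ∈ S, y = r₁ θ} - sSup {y : ℝ | ∃ θ ∈ S, y = r₂ θ}| ≤ ε := by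
  obtain ⟨θ₀, hθ₀⟩ := hS
  have hε : 0 ≤ ε := le_trans (abs_nonneg _) (h θ₀ hθ₀)
  set A := {y : ℝ | ∃ θ ∈ S, y = r₁ θ} with hA
  set B := {y : ℝ | ∃ θ ∈ S, y = r₂ θ} with hB
  have hAne : A.Nonempty := ⟨r₁ θ₀, θ₀, hθ₀, rfl⟩
  have hBne : B.Nonempty := ⟨r₂ θ₀, θ₀, hθ₀, rfl⟩
  have hdir : ∀ θ ∈ S, r₁ θ ≤ r₂ θ + ε ∧ r₂ θ ≤ r₁ θ + ε := by
    intro θ hθ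
    have := abs_le.mp (h θ hθ)
    constructor <;> linarith [this.1, this.2]
  by_cases hbdd : BddAbove A
  · have hbddB : BddAbove B := by
      obtain ⟨M, hM⟩ := hbdd
      refine ⟨M + ε, ?_⟩
      rintro y ⟨θ, hθ, rfl⟩
      exact le_trans (hdir θ hθ).2 (add_le_add_left (hM ⟨θ, hθ, rfl⟩) ε)
    rw [abs_sub_le_iff]
    constructor
    · rw [sub_le_iff_le_add, add_comm]
      refine csSup_le hAne ?_
      rintro y ⟨θ, hθ, rfl⟩
      exact le_trans (hdir θ hθ).1 (add_le_add_left (le_csSup hbddB ⟨θ, hθ, rfl⟩) ε)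
    · rw [sub_le_iff_le_add, add_comm]
      refine csSup_le hBne ?_
      rintro y ⟨θ, hθ, rfl⟩
      exact le_trans (hdir θ hθ).2 (add_le_add_left (le_csSup hbdd ⟨θ, hθ, rfl⟩) ε)
  · have hbddB : ¬ BddAbove B := by
      intro hbB
      apply hbdd
      obtain ⟨M, hM⟩ := hbB
      refine ⟨M + ε, ?_⟩
      rintro y ⟨θ, hθ, rfl⟩
      exact le_trans (hdir θ hθ).1 (add_le_add_left (hM ⟨θ, hθ, rfl⟩) ε)
    rw [Real.sSup_of_not_bddAbove hbdd, Real.sSup_of_not_bddAbove hbddB]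
    simpa using hε

/-- Second-order Taylor bound for a `C²` function on the unit ball. -/
lemma taylor_bound {d : ℕ} {g : Eu d → ℝ} (hg : ContDiff ℝ 2 g) :
    ∃ C : ℝ, 0 ≤ C ∧ ∀ z : Eu d, ‖z‖ ≤ 1 →
      |g z - g 0 - fderiv ℝ g 0 z| ≤ C * ‖z‖ ^ 2 := by
  have hd1 : ContDiff ℝ 1 (fderiv ℝ g) := hg.fderiv_right (by norm_num)
  have hdiff : Differentiable ℝ g := hg.differentiable (by norm_num)
  have cont2 := hd1.continuous_fderiv (by norm_num)
  obtain ⟨M, hM⟩ := (isCompact_closedBall (0 : Eu d) 1).exists_bound_of_continuousOn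
    cont2.continuousOn
  refine ⟨max M 0, le_max_right _ _, ?_⟩
  have step1 : ∀ w : Eu d, ‖w‖ ≤ 1 →
      ‖fderiv ℝ g w - fderiv ℝ g 0‖ ≤ max M 0 * ‖w‖ := by
    intro w hw
    have := (convex_closedBall (0 : Eu d) 1).norm_image_sub_le_of_norm_fderiv_le
      (f := fderiv ℝ g) (C := max M 0)
      (fun v _ => (hd1.differentiable (by norm_num)).differentiableAt)
      (fun v hv => le_trans (hM v hv) (le_max_left _ _))
      (Metric.mem_closedBall_self zero_le_one)
      (by simpa [Metric.mem_closedBall] using hw)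
    simpa using this
  intro z hz
  set L := fderiv ℝ g 0 with hL
  set φ : Eu d → ℝ := fun w => g w - (g 0 + L w) with hφ
  have hφdiff : ∀ w : Eu d, DifferentiableAt ℝ φ w := by
    intro w
    exact ((hdiff w).sub ((differentiableAt_const _).add (L.differentiableAt)))
  have hφd : ∀ w : Eu d, fderiv ℝ φ w = fderiv ℝ g w - L := by
    intro w
    rw [hφ, fderiv_fun_sub (g := fun y => g 0 + L y) (hdiff w)
        ((differentiableAt_const _).add L.differentiableAt),
      fderiv_const_add, L.fderiv]
  have key : ‖φ z - φ 0‖ ≤ max M 0 * ‖z‖ * ‖z - 0‖ := by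
    refine (convex_closedBall (0 : Eu d) ‖z‖).norm_image_sub_le_of_norm_fderiv_le
      (fun v _ => hφdiff v) ?_ (Metric.mem_closedBall_self (norm_nonneg z))
      (by simp [Metric.mem_closedBall])
    intro v hv
    rw [hφd]
    have hv' : ‖v‖ ≤ ‖z‖ := by simpa [Metric.mem_closedBall] using hv
    calc ‖fderiv ℝ g v - L‖ ≤ max M 0 * ‖v‖ := step1 v (hv'.trans hz)
      _ ≤ max M 0 * ‖z‖ := by
          exact mul_le_mul_of_nonneg_left hv' (le_max_right _ _)
  have hφ0 : φ 0 = 0 := by simp [hφ]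
  have : |g z - g 0 - L z| = ‖φ z - φ 0‖ := by
    rw [hφ0, sub_zero, hφ, Real.norm_eq_abs]
    ring_nf
  rw [this]
  calc ‖φ z - φ 0‖ ≤ max M 0 * ‖z‖ * ‖z - 0‖ := key
    _ = max M 0 * ‖z‖ ^ 2 := by rw [sub_zero]; ring

/-- Derivative of a translate at `0`. -/
lemma fderiv_shift {d : ℕ} {g : Eu d → ℝ} {x : Eu d} (hg : DifferentiableAt ℝ g x) :
    fderiv ℝ (fun z => g (x + z)) 0 = fderiv ℝ g x := by
  have h1 : HasFDerivAt (fun z : Eu d => x + z)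
      (ContinuousLinearMap.id ℝ (Eu d)) 0 := (hasFDerivAt_id (0 : Eu d)).const_add x
  have h2 : HasFDerivAt g (fderiv ℝ g x) (x + 0) := by
    simpa using hg.hasFDerivAt
  have h3 := h2.comp (0 : Eu d) h1
  simpa [Function.comp_def] using h3.fderiv

/-- **Statement 14** (Condition (C9) for `G^κ`): if the small jumps vanish uniformly over
`Θ` and `D_x g₁(t,x) = D_x g₂(t,x)`, then `G^κ` does not distinguish `g₁` from `g₂` in
the limit `κ → 0`. -/
theorem Gk_condition_C9 {d : ℕ}
    (Θ : Set (Eu d × Matrix (Fin d) (Fin d) ℝ × Measure (Eu d)))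
    (hne : Θ.Nonempty) (hmeas : MeasurableSet Θ) (htrip : IsLevyTripletSet Θ)
    (hK : HasUniformBound Θ) (hKeps : HasVanishingSmallJumps Θ)
    {t : ℝ} (ht : 0 < t) (x : Eu d) (p : Eu d)
    (q : Matrix (Fin d) (Fin d) ℝ) (hq : q.IsSymm)
    (f : ℝ → Eu d → ℝ) (hf : IsBoundedSC f)
    (g₁ g₂ : ℝ → Eu d → ℝ) (hg₁ : IsC12 g₁) (hg₂ : IsC12 g₂)
    (hD : fderiv ℝ (g₁ t) x = fderiv ℝ (g₂ t) x) :
    Tendsto (fun κ =>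
        |Gkop Θ κ p q (fun z => f t (x + z)) (fun z => g₁ t (x + z))
          - Gkop Θ κ p q (fun z => f t (x + z)) (fun z => g₂ t (x + z))|)
      (nhdsWithin 0 (Set.Ioi 0)) (nhds 0) := by
  have hgc₁ : ContDiff ℝ 2 (fun z : Eu d => g₁ t (x + z)) :=
    (hg₁.2.2.1 t ht).comp (contDiff_const.add contDiff_id)
  have hgc₂ : ContDiff ℝ 2 (fun z : Eu d => g₂ t (x + z)) :=
    (hg₂.2.2.1 t ht).comp (contDiff_const.add contDiff_id)
  obtain ⟨C₁, hC₁0, hC₁⟩ := taylor_bound hgc₁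
  obtain ⟨C₂, hC₂0, hC₂⟩ := taylor_bound hgc₂
  have hL₁ : fderiv ℝ (fun z => g₁ t (x + z)) 0 = fderiv ℝ (g₁ t) x :=
    fderiv_shift (((hg₁.2.2.1 t ht).differentiable (by norm_num)) x)
  have hL₂ : fderiv ℝ (fun z => g₂ t (x + z)) 0 = fderiv ℝ (g₁ t) x := by
    rw [fderiv_shift (((hg₂.2.2.1 t ht).differentiable (by norm_num)) x), hD]
  set 𝒦 : ℝ → ℝ≥0∞ := fun ε => ⨆ θ ∈ Θ, ∫⁻ z in {z : Eu d | ‖z‖ ≤ ε},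
      ((‖z‖₊ : ℝ≥0∞) ^ 2) ∂θ.2.2 with h𝒦
  have hKeps' : Tendsto 𝒦 (nhdsWithin 0 (Set.Ioi 0)) (nhds 0) := hKeps
  -- eventual bound
  have hev : ∀ᶠ κ in nhdsWithin (0:ℝ) (Set.Ioi 0),
      |Gkop Θ κ p q (fun z => f t (x + z)) (fun z => g₁ t (x + z))
        - Gkop Θ κ p q (fun z => f t (x + z)) (fun z => g₂ t (x + z))|
        ≤ (C₁ + C₂) * (𝒦 κ).toReal := by
    have h1 : ∀ᶠ κ in nhdsWithin (0:ℝ) (Set.Ioi 0), κ ≤ 1 :=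
      eventually_nhdsWithin_of_eventually_nhds
        ((Filter.Tendsto.eventually_lt_const (by norm_num : (0:ℝ) < 1)
          (tendsto_id : Tendsto id (𝓝 (0:ℝ)) (𝓝 0))).mono fun _ h => h.le)
    have h2 : ∀ᶠ κ in nhdsWithin (0:ℝ) (Set.Ioi 0), 𝒦 κ < ⊤ :=
      hKeps'.eventually_lt_const (by norm_num)
    filter_upwards [h1, h2] with κ hκ1 hκtop
    -- the per-triplet bound
    set D : ℝ := (𝒦 κ).toReal with hD'
    have hDnn : 0 ≤ D := ENNReal.toReal_nonneg
    have hint : ∀ (g : Eu d → ℝ) (C : ℝ), 0 ≤ C →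
        (∀ z : Eu d, ‖z‖ ≤ 1 →
          |g z - g 0 - fderiv ℝ (g₁ t) x (trunc z)| ≤ C * ‖z‖ ^ 2) →
        ∀ θ ∈ Θ,
        |∫ z in {z : Eu d | ‖z‖ ≤ κ},
            (g z - g 0 - fderiv ℝ (g₁ t) x (trunc z)) ∂θ.2.2| ≤ C * D := by
      intro g C hC0 hC θ hθ
      have hle : (∫⁻ z in {z : Eu d | ‖z‖ ≤ κ}, ((‖z‖₊ : ℝ≥0∞) ^ 2) ∂θ.2.2) ≤ 𝒦 κ :=
        le_biSup (f := fun θ : Eu d × Matrix (Fin d) (Fin d) ℝ × Measure (Eu d) =>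
          ∫⁻ z in {z : Eu d | ‖z‖ ≤ κ}, ((‖z‖₊ : ℝ≥0∞) ^ 2) ∂θ.2.2) hθ
      have hms : MeasurableSet {z : Eu d | ‖z‖ ≤ κ} :=
        measurableSet_le (measurable_norm) measurable_const
      have hlin : (∫⁻ z in {z : Eu d | ‖z‖ ≤ κ},
          ENNReal.ofReal ‖g z - g 0 - fderiv ℝ (g₁ t) x (trunc z)‖ ∂θ.2.2)
          ≤ ENNReal.ofReal C * 𝒦 κ := by
        calc (∫⁻ z in {z : Eu d | ‖z‖ ≤ κ},
              ENNReal.ofReal ‖g z - g 0 - fderiv ℝ (g₁ t) x (trunc z)‖ ∂θ.2.2)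
            ≤ ∫⁻ z in {z : Eu d | ‖z‖ ≤ κ},
              ENNReal.ofReal C * ((‖z‖₊ : ℝ≥0∞) ^ 2) ∂θ.2.2 := by
              refine lintegral_mono_ae ?_
              filter_upwards [ae_restrict_mem hms] with z hz
              have hz1 : ‖z‖ ≤ 1 := le_trans hz hκ1
              have := hC z hz1
              calc ENNReal.ofReal ‖g z - g 0 - fderiv ℝ (g₁ t) x (trunc z)‖
                  ≤ ENNReal.ofReal (C * ‖z‖ ^ 2) :=
                    ENNReal.ofReal_le_ofReal (by rwa [Real.norm_eq_abs])
                _ = ENNReal.ofReal C * ((‖z‖₊ : ℝ≥0∞) ^ 2) := by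
                    rw [ENNReal.ofReal_mul hC0,
                      ENNReal.ofReal_pow (norm_nonneg z), ofReal_norm_eq_enorm, enorm_eq_nnnorm]
          _ = ENNReal.ofReal C * ∫⁻ z in {z : Eu d | ‖z‖ ≤ κ},
              ((‖z‖₊ : ℝ≥0∞) ^ 2) ∂θ.2.2 :=
              lintegral_const_mul' _ _ ENNReal.ofReal_ne_top
          _ ≤ ENNReal.ofReal C * 𝒦 κ := mul_le_mul_right hle _
      have h0 : |∫ z in {z : Eu d | ‖z‖ ≤ κ},
          (g z - g 0 - fderiv ℝ (g₁ t) x (trunc z)) ∂θ.2.2|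
          ≤ ((∫⁻ z in {z : Eu d | ‖z‖ ≤ κ},
            ENNReal.ofReal ‖g z - g 0 - fderiv ℝ (g₁ t) x (trunc z)‖ ∂θ.2.2)).toReal := by
        rw [← Real.norm_eq_abs]
        exact norm_integral_le_lintegral_norm _
      refine h0.trans ?_
      calc ((∫⁻ z in {z : Eu d | ‖z‖ ≤ κ},
            ENNReal.ofReal ‖g z - g 0 - fderiv ℝ (g₁ t) x (trunc z)‖ ∂θ.2.2)).toReal
          ≤ (ENNReal.ofReal C * 𝒦 κ).toReal :=
            ENNReal.toReal_mono
              (ENNReal.mul_ne_top ENNReal.ofReal_ne_top hκtop.ne) hlin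
        _ = C * D := by
            rw [ENNReal.toReal_mul, ENNReal.toReal_ofReal hC0]
    -- assemble via the sSup comparison
    have main : ∀ θ ∈ Θ,
        |((∑ i, p i * θ.1 i) + (1 / 2) * (q * θ.2.1).trace
            + (∫ z in {z : Eu d | κ < ‖z‖},
                (f t (x + z) - f t (x + 0)
                  - fderiv ℝ (fun z => g₁ t (x + z)) 0 (trunc z)) ∂θ.2.2)
            + (∫ z in {z : Eu d | ‖z‖ ≤ κ},
                (g₁ t (x + z) - g₁ t (x + 0)
                  - fderiv ℝ (fun z => g₁ t (x + z)) 0 (trunc z)) ∂θ.2.2))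
          - ((∑ i, p i * θ.1 i) + (1 / 2) * (q * θ.2.1).trace
            + (∫ z in {z : Eu d | κ < ‖z‖},
                (f t (x + z) - f t (x + 0)
                  - fderiv ℝ (fun z => g₂ t (x + z)) 0 (trunc z)) ∂θ.2.2)
            + (∫ z in {z : Eu d | ‖z‖ ≤ κ},
                (g₂ t (x + z) - g₂ t (x + 0)
                  - fderiv ℝ (fun z => g₂ t (x + z)) 0 (trunc z)) ∂θ.2.2))|
          ≤ (C₁ + C₂) * D := by
      intro θ hθ
      rw [hL₁, hL₂]
      have hS₁ := hint (fun z => g₁ t (x + z)) C₁ hC₁0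
        (fun z hz => by
          have := hC₁ z hz
          rw [hL₁] at this
          simpa [trunc, if_pos hz] using this) θ hθ
      have hS₂ := hint (fun z => g₂ t (x + z)) C₂ hC₂0
        (fun z hz => by
          have := hC₂ z hz
          rw [hL₂] at this
          simpa [trunc, if_pos hz] using this) θ hθ
      have harith : ∀ a b S₁ S₂ : ℝ, (a + b + S₁) - (a + b + S₂) = S₁ - S₂ := by
        intro a b S₁ S₂; ring
      rw [harith]
      calc |(∫ z in {z : Eu d | ‖z‖ ≤ κ},
              (g₁ t (x + z) - g₁ t (x + 0) - fderiv ℝ (g₁ t) x (trunc z)) ∂θ.2.2)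
            - (∫ z in {z : Eu d | ‖z‖ ≤ κ},
              (g₂ t (x + z) - g₂ t (x + 0) - fderiv ℝ (g₁ t) x (trunc z)) ∂θ.2.2)|
          ≤ |∫ z in {z : Eu d | ‖z‖ ≤ κ},
              (g₁ t (x + z) - g₁ t (x + 0) - fderiv ℝ (g₁ t) x (trunc z)) ∂θ.2.2|
            + |∫ z in {z : Eu d | ‖z‖ ≤ κ},
              (g₂ t (x + z) - g₂ t (x + 0) - fderiv ℝ (g₁ t) x (trunc z)) ∂θ.2.2| :=
            abs_sub _ _
        _ ≤ C₁ * D + C₂ * D := add_le_add hS₁ hS₂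
        _ = (C₁ + C₂) * D := by ring
    exact abs_csSup_sub_csSup_le hne _ _ main
  -- conclusion by squeezing
  have hKto : Tendsto (fun κ => (𝒦 κ).toReal) (nhdsWithin (0:ℝ) (Set.Ioi 0)) (nhds 0) := by
    have := (ENNReal.tendsto_toReal (a := 0) (by simp)).comp hKeps'
    exact this
  have hgto : Tendsto (fun κ => (C₁ + C₂) * (𝒦 κ).toReal)
      (nhdsWithin (0:ℝ) (Set.Ioi 0)) (nhds 0) := by
    simpa using hKto.const_mul (C₁ + C₂)
  exact squeeze_zero' (Filter.Eventually.of_forall fun κ => abs_nonneg _) hev hgto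
end
end
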